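/- Let 2 <= p <= q and n >= 1. The number of (n+1)-tuples (M, x^1, ..., x^n) with M a word of length t over an alphabet of size q and each x^j a subsequence of M is at least (q + 1 - p)^t · (F_p(0) + ... + F_p(t))^n and at most q^t · (F_q(0) + ... + F_q(t))^n. -/

import Mathlib

open List Finset

/-- The `q`-bonacci numbers: `F_q(0)=1`, `F_q(t)=2^(t-1)` for `1 ≤ t ≤ q`,
and `F_q(t)` is the sum of the previous `q` terms for `t > q`. -/
def qbonacci (q : ℕ) : ℕ → ℕ
  | 0 => 1
  | t + 1 =>
    if t + 1 ≤ q then 2 ^ t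
    else ∑ i ∈ Finset.range q, qbonacci q (t - i)
  decreasing_by exact Nat.lt_succ_of_le (Nat.sub_le t i)

/-- The length-`t` word cycling through the alphabet `{0, 1, ..., q-1}`. -/
def cyc (q t : ℕ) : List ℕ := (List.range t).map (· % q)

/-- The alternating binary word `0,1,0,1,...` of length `t` (A=0, C=1). -/
def alt (t : ℕ) : List ℕ := (List.range t).map (· % 2)

/-- `tau q x` is the least `s` such that `x` is a subsequence of `cyc q s`. -/
noncomputable def tau (q : ℕ) (x : List ℕ) : ℕ := sInf {s | x <+ cyc q s}

/-- Partial sums of the q-bonacci numbers. -/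
def Sb (q t : ℕ) : ℕ := ∑ i ∈ Finset.range (t+1), qbonacci q i

lemma qb_zero (q : ℕ) : qbonacci q 0 = 1 := by rw [qbonacci]

lemma two_pow_sum (n : ℕ) : 1 + ∑ j ∈ Finset.range n, 2 ^ j = 2 ^ n := by
  induction n with
  | zero => simp
  | succ n ih => rw [Finset.sum_range_succ, pow_succ]; omega

lemma qb_succ_le {q t : ℕ} (h : t + 1 ≤ q) : qbonacci q (t+1) = 2 ^ t := by
  rw [qbonacci, if_pos h]

lemma qb_succ_gt {q t : ℕ} (h : q < t + 1) :
    qbonacci q (t+1) = ∑ i ∈ Finset.range q, qbonacci q (t - i) := by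
  rw [qbonacci, if_neg (by omega)]

lemma Sb_succ (q t : ℕ) : Sb q (t+1) = Sb q t + qbonacci q (t+1) := by
  simp [Sb, Finset.sum_range_succ]

lemma Sb_zero (q : ℕ) : Sb q 0 = 1 := by simp [Sb, qb_zero]

lemma Sb_mono (q : ℕ) : Monotone (Sb q) := by
  intro a b hab
  exact Finset.sum_le_sum_of_subset (by simp [Finset.range_subset]; omega)

lemma Sb_pos (q t : ℕ) : 1 ≤ Sb q t := by
  calc 1 = Sb q 0 := (Sb_zero q).symm
  _ ≤ Sb q t := Sb_mono q (Nat.zero_le t)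

lemma Sb_two_pow {q t : ℕ} (h : t ≤ q) : Sb q t = 2 ^ t := by
  induction t with
  | zero => simp [Sb_zero]
  | succ t ih =>
      rw [Sb_succ, ih (by omega), qb_succ_le h]
      ring

lemma Sb_rec {q : ℕ} (hq : 1 ≤ q) (t : ℕ) :
    Sb q t = 1 + ∑ k ∈ Finset.range (min q t), Sb q (t - 1 - k) := by
  induction t with
  | zero => simp [Sb_zero]
  | succ t ih =>
      rcases le_or_gt (t+1) q with h | h
      · have hmin : min q (t+1) = t+1 := by omega
        rw [hmin]
        have : ∑ k ∈ Finset.range (t+1), Sb q (t + 1 - 1 - k)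
            = ∑ j ∈ Finset.range (t+1), Sb q j := by
          rw [← Finset.sum_range_reflect]
          apply Finset.sum_congr rfl
          intro k hk; simp at hk; congr 1; omega
        rw [this]
        have h2 : ∀ j ∈ Finset.range (t+1), Sb q j = 2 ^ j := by
          intro j hj; simp at hj; exact Sb_two_pow (by omega)
        rw [Finset.sum_congr rfl h2, two_pow_sum, Sb_two_pow h]
      · have hmin1 : min q (t+1) = q := by omega
        have hmin2 : min q t = q := by omega
        rw [hmin1, Sb_succ, ih, qb_succ_gt h, hmin2]
        have : ∑ k ∈ Finset.range q, Sb q (t + 1 - 1 - k)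
            = ∑ k ∈ Finset.range q, (Sb q (t - 1 - k) + qbonacci q (t - k)) := by
          apply Finset.sum_congr rfl
          intro k hk; simp at hk
          have h1 : t + 1 - 1 - k = (t - 1 - k) + 1 := by omega
          rw [h1, Sb_succ]
          congr 2
          omega
        rw [this, Finset.sum_add_distrib]
        omega

section Counting
variable {α : Type*} [DecidableEq α]

/-- Number of distinct sublists (subsequences) of `w`, including the empty one. -/
def Dcnt (w : List α) : ℕ := w.sublists.toFinset.card

/-- The finset of distinct sublists of `w` ending with the letter `b`. -/
def Efin (b : α) (w : List α) : Finset (List α) :=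
  w.sublists.toFinset.filter (fun x => x.getLast? = some b)

def Ecnt (b : α) (w : List α) : ℕ := (Efin b w).card

lemma mem_subFinset {x w : List α} : x ∈ w.sublists.toFinset ↔ x <+ w := by
  simp [List.mem_sublists]

lemma mem_Efin {b : α} {x w : List α} :
    x ∈ Efin b w ↔ x <+ w ∧ x.getLast? = some b := by
  simp [Efin, List.mem_sublists]

lemma Dcnt_nil : Dcnt ([] : List α) = 1 := by simp [Dcnt]

lemma Dcnt_mono {v w : List α} (h : v <+ w) : Dcnt v ≤ Dcnt w := by
  apply Finset.card_le_card
  intro x hx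
  rw [mem_subFinset] at hx ⊢
  exact hx.trans h

lemma Dcnt_pos (w : List α) : 1 ≤ Dcnt w := by
  have : ([] : List α) ∈ w.sublists.toFinset := mem_subFinset.2 (List.nil_sublist w)
  exact Finset.card_pos.2 ⟨[], this⟩

lemma Ecnt_nil (b : α) : Ecnt b ([] : List α) = 0 := by
  simp [Ecnt, Efin, List.sublists_nil]

lemma Ecnt_eq_zero {b : α} {w : List α} (h : b ∉ w) : Ecnt b w = 0 := by
  rw [Ecnt, Finset.card_eq_zero]
  ext x
  simp only [mem_Efin, Finset.notMem_empty, iff_false, not_and]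
  intro hx hlast
  obtain ⟨y, rfl⟩ := List.getLast?_eq_some_iff.1 hlast
  exact h (hx.subset (by simp))

/-- Partition of sublists by last letter. -/
lemma Dcnt_eq_one_add [Fintype α] (w : List α) :
    Dcnt w = 1 + ∑ a, Ecnt a w := by
  have key : Dcnt w = ∑ o ∈ (Finset.univ : Finset (Option α)),
      (w.sublists.toFinset.filter (fun x => x.getLast? = o)).card := by
    exact Finset.card_eq_sum_card_fiberwise (fun x _ => Finset.mem_univ _)
  rw [key, Fintype.sum_option]
  congr 1
  · have : w.sublists.toFinset.filter (fun x => x.getLast? = none) = {[]} := by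
      ext x
      simp [List.getLast?_eq_none_iff, List.mem_sublists]
      rintro rfl; exact List.nil_sublist w
    rw [this, Finset.card_singleton]

lemma Ecnt_concat_self [Fintype α] (b : α) (w : List α) :
    Ecnt b (w ++ [b]) = Dcnt w := by
  rw [Ecnt, Dcnt]
  symm
  apply Finset.card_bij (fun y _ => y ++ [b])
  · intro y hy
    rw [mem_subFinset] at hy
    rw [mem_Efin]
    exact ⟨hy.append (List.Sublist.refl _), List.getLast?_concat⟩
  · intro y₁ h₁ y₂ h₂ h
    exact List.append_cancel_right h
  · intro x hx
    rw [mem_Efin] at hx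
    obtain ⟨hsub, hlast⟩ := hx
    obtain ⟨y, rfl⟩ := List.getLast?_eq_some_iff.1 hlast
    refine ⟨y, ?_, rfl⟩
    rw [mem_subFinset]
    -- y ++ [b] <+ w ++ [b] → y <+ w
    rcases List.sublist_append_iff.1 hsub with ⟨l₁, l₂, heq, h₁, h₂⟩
    rcases List.sublist_singleton.1 h₂ with rfl | rfl
    · rw [List.append_nil] at heq
      subst heq
      exact (List.sublist_append_left y [b]).trans h₁
    · have : l₁ = y := List.append_cancel_right heq.symm
      subst this
      exact h₁

lemma Ecnt_concat_ne [Fintype α] {a b : α} (hab : a ≠ b) (w : List α) :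
    Ecnt a (w ++ [b]) = Ecnt a w := by
  unfold Ecnt
  congr 1
  ext x
  simp only [mem_Efin]
  constructor
  · rintro ⟨hsub, hlast⟩
    refine ⟨?_, hlast⟩
    rcases List.sublist_append_iff.1 hsub with ⟨l₁, l₂, heq, h₁, h₂⟩
    rcases List.sublist_singleton.1 h₂ with rfl | rfl
    · rw [List.append_nil] at heq; subst heq; exact h₁
    · subst heq
      rw [List.getLast?_concat] at hlast
      exact absurd (Option.some_injective _ hlast).symm hab
  · rintro ⟨hsub, hlast⟩
    exact ⟨hsub.trans (List.sublist_append_left w [b]), hlast⟩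

/-- The key recurrence. -/
lemma Dcnt_concat [Fintype α] (b : α) (w : List α) :
    Dcnt (w ++ [b]) + Ecnt b w = 2 * Dcnt w := by
  have h1 := Dcnt_eq_one_add (w ++ [b])
  have h2 := Dcnt_eq_one_add w
  have e1 : ∑ a, Ecnt a (w ++ [b])
      = Ecnt b (w ++ [b]) + ∑ a ∈ Finset.univ.erase b, Ecnt a (w ++ [b]) :=
    (Finset.add_sum_erase _ _ (Finset.mem_univ b)).symm
  have e2 : ∑ a, Ecnt a w = Ecnt b w + ∑ a ∈ Finset.univ.erase b, Ecnt a w :=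
    (Finset.add_sum_erase _ _ (Finset.mem_univ b)).symm
  have e3 : ∑ a ∈ Finset.univ.erase b, Ecnt a (w ++ [b])
      = ∑ a ∈ Finset.univ.erase b, Ecnt a w := by
    apply Finset.sum_congr rfl
    intro a ha
    exact Ecnt_concat_ne (Finset.ne_of_mem_erase ha) w
  rw [Ecnt_concat_self] at e1
  omega

end Counting

section Upper
variable {α : Type*} [DecidableEq α]

lemma Ecnt_le_take {b : α} {w : List α} {m : ℕ} (hm : m ≤ w.length) (h : b ∉ w.drop m) :
    Ecnt b w ≤ Dcnt (w.take (m-1)) := by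
  have h3 : (w.take m).dropLast = w.take (m-1) := by
    rw [List.dropLast_eq_take, List.length_take, List.take_take]
    congr 1
    omega
  apply Finset.card_le_card_of_injOn (fun x => x.dropLast)
  · intro x hx
    simp only [Finset.mem_coe] at hx ⊢
    rw [mem_Efin] at hx
    obtain ⟨hsub, hlast⟩ := hx
    obtain ⟨y, rfl⟩ := List.getLast?_eq_some_iff.1 hlast
    rw [List.dropLast_concat, mem_subFinset]
    have h1 : y ++ [b] <+ w.take m := by
      conv at hsub => rw [← List.take_append_drop m w]
      rcases List.sublist_append_iff.1 hsub with ⟨l₁, l₂, heq, hl₁, hl₂⟩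
      rcases eq_or_ne l₂ [] with rfl | hne
      · rw [List.append_nil] at heq; subst heq; exact hl₁
      · exfalso
        have hl : l₂.getLast? = some b := by
          rw [← List.getLast?_append_of_ne_nil l₁ hne, ← heq, List.getLast?_concat]
        have hbm : b ∈ l₂ := by
          obtain ⟨z, rfl⟩ := List.getLast?_eq_some_iff.1 hl
          simp
        exact h (hl₂.subset hbm)
    rw [← h3]
    rcases eq_or_ne (w.take m) [] with hnil | hne
    · rw [hnil] at h1
      simp at h1
    · conv at h1 => rw [← List.dropLast_concat_getLast hne]
      rcases List.sublist_append_iff.1 h1 with ⟨l₁, l₂, heq, hl₁, hl₂⟩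
      rcases List.sublist_singleton.1 hl₂ with rfl | rfl
      · rw [List.append_nil] at heq; subst heq
        exact (List.sublist_append_left y [b]).trans hl₁
      · have : y = l₁ := (List.append_inj' heq rfl).1
        subst this
        exact hl₁
  · intro x₁ h₁ x₂ h₂ hdl
    simp only [Finset.mem_coe, mem_Efin] at h₁ h₂
    obtain ⟨y₁, rfl⟩ := List.getLast?_eq_some_iff.1 h₁.2
    obtain ⟨y₂, rfl⟩ := List.getLast?_eq_some_iff.1 h₂.2
    simp only [List.dropLast_concat] at hdl
    rw [hdl]

lemma sum_Ecnt_le [Fintype α] (hq : 1 ≤ Fintype.card α) (w : List α) (T : Finset α) :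
    ∑ a ∈ T, Ecnt a w ≤
      ∑ k ∈ Finset.range (min T.card w.length), Sb (Fintype.card α) (w.length - 1 - k) := by
  induction w using List.reverseRecOn generalizing T with
  | nil => simp [Ecnt_nil]
  | append_singleton w b IH =>
    set q := Fintype.card α with hqdef
    have hlen : (w ++ [b]).length = w.length + 1 := by simp
    set t := w.length with htdef
    have hD : Dcnt w ≤ Sb q t := by
      have h1 := Dcnt_eq_one_add w
      have h2 := Sb_rec (q := q) hq t
      have h3 := IH Finset.univ
      rw [Finset.card_univ, ← hqdef] at h3
      omega
    rw [hlen]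
    by_cases hb : b ∈ T
    · have e1 : ∑ a ∈ T, Ecnt a (w ++ [b])
          = Dcnt w + ∑ a ∈ T.erase b, Ecnt a w := by
        rw [← Finset.add_sum_erase _ _ hb, Ecnt_concat_self]
        congr 1
        exact Finset.sum_congr rfl fun a ha => Ecnt_concat_ne (Finset.ne_of_mem_erase ha) w
      rw [e1]
      have hT1 : 1 ≤ T.card := Finset.card_pos.2 ⟨b, hb⟩
      have h3 := IH (T.erase b)
      rw [Finset.card_erase_of_mem hb] at h3
      have hmin : min T.card (t+1) = (min (T.card - 1) t) + 1 := by omega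
      rw [hmin, Finset.sum_range_succ']
      have e4 : ∀ k ∈ Finset.range (min (T.card - 1) t),
          Sb q (t + 1 - 1 - (k+1)) = Sb q (t - 1 - k) := by
        intro k _; congr 1; omega
      rw [Finset.sum_congr rfl e4]
      have e5 : Sb q (t + 1 - 1 - 0) = Sb q t := by norm_num
      rw [e5]
      omega
    · have e1 : ∑ a ∈ T, Ecnt a (w ++ [b]) = ∑ a ∈ T, Ecnt a w :=
        Finset.sum_congr rfl fun a ha => Ecnt_concat_ne (by rintro rfl; exact hb ha) w
      rw [e1]
      refine (IH T).trans ?_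
      calc ∑ k ∈ Finset.range (min T.card t), Sb q (t - 1 - k)
          ≤ ∑ k ∈ Finset.range (min T.card t), Sb q (t + 1 - 1 - k) :=
            Finset.sum_le_sum fun k _ => Sb_mono q (by omega)
        _ ≤ ∑ k ∈ Finset.range (min T.card (t+1)), Sb q (t + 1 - 1 - k) :=
            Finset.sum_le_sum_of_subset (Finset.range_subset_range.2 (by omega))

lemma Dcnt_le_Sb [Fintype α] (hq : 1 ≤ Fintype.card α) (w : List α) :
    Dcnt w ≤ Sb (Fintype.card α) w.length := by
  have h1 := Dcnt_eq_one_add w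
  have h2 := Sb_rec (q := Fintype.card α) hq w.length
  have h3 := sum_Ecnt_le hq w Finset.univ
  rw [Finset.card_univ] at h3
  omega

end Upper

section Lower
variable {α : Type*} [DecidableEq α] [Fintype α]

/-- Letters allowed after the word `w` (not among the last `p-1` letters). -/
def allowedF (p : ℕ) (w : List α) : Finset α :=
  Finset.univ \ (w.drop (w.length - (p-1))).toFinset

/-- Words of length `t` in which every letter differs from the previous `p-1` letters. -/
def SW (α : Type*) [DecidableEq α] [Fintype α] (p : ℕ) : ℕ → Finset (List α)
  | 0 => {[]}
  | t+1 => (SW α p t).biUnion (fun w => (allowedF p w).image (fun b => w ++ [b]))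

lemma mem_SW_succ {p t : ℕ} {w : List α} :
    w ∈ SW α p (t+1) ↔ ∃ u ∈ SW α p t, ∃ b ∈ allowedF p u, u ++ [b] = w := by
  simp [SW, Finset.mem_biUnion, Finset.mem_image]

lemma len_SW {p t : ℕ} {w : List α} (h : w ∈ SW α p t) : w.length = t := by
  induction t generalizing w with
  | zero => simp [SW] at h; subst h; rfl
  | succ t ih =>
    rcases mem_SW_succ.1 h with ⟨u, hu, b, _, rfl⟩
    simp [ih hu]

lemma card_SW_succ (p t : ℕ) :
    (SW α p (t+1)).card = ∑ w ∈ SW α p t, (allowedF p w).card := by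
  rw [show SW α p (t+1) = (SW α p t).biUnion
      (fun w => (allowedF p w).image (fun b => w ++ [b])) from rfl]
  rw [Finset.card_biUnion]
  · exact Finset.sum_congr rfl fun w _ =>
      Finset.card_image_of_injective _ (fun b₁ b₂ h => by simpa using h)
  · intro w₁ _ w₂ _ hne
    simp only [Function.onFun]
    rw [Finset.disjoint_left]
    intro x hx₁ hx₂
    rw [Finset.mem_image] at hx₁ hx₂
    obtain ⟨b₁, _, rfl⟩ := hx₁
    obtain ⟨b₂, _, heq⟩ := hx₂
    exact hne ((List.append_inj' heq rfl).1).symm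

lemma card_allowedF {p : ℕ} (hp : 1 ≤ p) (w : List α) :
    Fintype.card α + 1 - p ≤ (allowedF p w).card := by
  have h1 : ((w.drop (w.length - (p-1))).toFinset).card ≤ p - 1 :=
    le_trans (List.toFinset_card_le _) (by simp [List.length_drop]; omega)
  have h2 := Finset.le_card_sdiff ((w.drop (w.length - (p-1))).toFinset) Finset.univ
  rw [Finset.card_univ] at h2
  unfold allowedF
  omega

lemma card_SW_ge {p : ℕ} (hp : 1 ≤ p) (t : ℕ) :
    (Fintype.card α + 1 - p) ^ t ≤ (SW α p t).card := by
  induction t with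
  | zero => simp [SW]
  | succ t ih =>
    rw [card_SW_succ, pow_succ]
    calc (Fintype.card α + 1 - p) ^ t * (Fintype.card α + 1 - p)
        ≤ (SW α p t).card * (Fintype.card α + 1 - p) :=
          Nat.mul_le_mul_right _ ih
      _ ≤ ∑ w ∈ SW α p t, (allowedF p w).card := by
          rw [← smul_eq_mul]
          exact Finset.card_nsmul_le_sum _ _ _ (fun w _ => card_allowedF hp w)

lemma allowedF_one (w : List α) : allowedF 1 w = (Finset.univ : Finset α) := by
  simp [allowedF, List.drop_length]

lemma mem_SW_one {t : ℕ} {w : List α} : w ∈ SW α 1 t ↔ w.length = t := by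
  constructor
  · exact len_SW
  · induction t generalizing w with
    | zero =>
      intro h
      rw [List.length_eq_zero_iff] at h
      subst h
      simp [SW]
    | succ t ih =>
      intro h
      have hne : w ≠ [] := by intro hw; simp [hw] at h
      rw [← List.dropLast_concat_getLast hne]
      apply mem_SW_succ.2
      exact ⟨w.dropLast, ih (by simp [List.length_dropLast]; omega), w.getLast hne,
        by simp [allowedF_one], rfl⟩

lemma card_SW_one (t : ℕ) : (SW α 1 t).card = Fintype.card α ^ t := by
  induction t with
  | zero => simp [SW]
  | succ t ih =>
    rw [card_SW_succ, pow_succ, ← ih]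
    have h : ∀ w ∈ SW α 1 t, (allowedF 1 w).card = Fintype.card α := by
      intro w _; rw [allowedF_one, Finset.card_univ]
    rw [Finset.sum_congr rfl h, Finset.sum_const, smul_eq_mul]

lemma telescope {c : ℕ} (d F : ℕ → ℕ)
    (h : ∀ s, 1 ≤ s → s ≤ c → d (s-1) + F s ≤ d s) :
    ∀ a b, a ≤ b → b ≤ c → d a + ∑ j ∈ Finset.Ioc a b, F j ≤ d b := by
  intro a b hab hbc
  induction b, hab using Nat.le_induction with
  | base => simp
  | succ b hab ih =>
    rw [Finset.sum_Ioc_succ_top hab]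
    have h1 := h (b+1) (by omega) hbc
    have h2 := ih (by omega)
    simp only [Nat.add_sub_cancel] at h1
    omega

lemma Sb_Ioc (q t : ℕ) : Sb q t = 1 + ∑ j ∈ Finset.Ioc 0 t, qbonacci q j := by
  induction t with
  | zero => simp [Sb_zero]
  | succ t ih =>
    rw [Sb_succ, ih, Finset.sum_Ioc_succ_top (Nat.zero_le _)]
    ring

lemma qb_Ioc {p s : ℕ} (h : p ≤ s) (hp : 1 ≤ p) :
    qbonacci p (s+1) = ∑ j ∈ Finset.Ioc (s - p) s, qbonacci p j := by
  rw [qb_succ_gt (by omega)]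
  apply Finset.sum_nbij' (fun i => s - i) (fun j => s - j)
  · intro a ha; simp at ha ⊢; omega
  · intro a ha; simp at ha ⊢; omega
  · intro a ha; simp at ha ⊢; omega
  · intro a ha; simp at ha ⊢; omega
  · intro a _; rfl

lemma SW_incr {p : ℕ} (hp : 2 ≤ p) :
    ∀ t, ∀ w ∈ SW α p t, ∀ s, 1 ≤ s → s ≤ t →
      Dcnt (w.take (s-1)) + qbonacci p s ≤ Dcnt (w.take s) := by
  intro t
  induction t with
  | zero => intro w _ s h1 h2; omega
  | succ t IH =>
    intro w hw s hs1 hs2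
    rcases mem_SW_succ.1 hw with ⟨u, hu, b, hb, rfl⟩
    have hlu : u.length = t := len_SW hu
    rcases Nat.lt_or_ge s (t+1) with hlt | hge
    · have e1 : (u ++ [b]).take s = u.take s :=
        List.take_append_of_le_length (by omega)
      have e2 : (u ++ [b]).take (s-1) = u.take (s-1) :=
        List.take_append_of_le_length (by omega)
      rw [e1, e2]
      exact IH u hu s hs1 (by omega)
    · have hseq : s = t + 1 := by omega
      subst hseq
      have e1 : (u ++ [b]).take (t+1) = u ++ [b] :=
        List.take_of_length_le (by simp [hlu])
      have e2 : (u ++ [b]).take (t+1-1) = u := by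
        have h : t + 1 - 1 = t := rfl
        rw [h, List.take_append_of_le_length (by omega), List.take_of_length_le (by omega)]
      rw [e1, e2]
      have hbnot : b ∉ u.drop (u.length - (p-1)) := by
        rw [allowedF, Finset.mem_sdiff] at hb
        simpa using hb.2
      rw [hlu] at hbnot
      have hrec := Dcnt_concat b u
      have htel := telescope (fun s => Dcnt (u.take s)) (qbonacci p) (IH u hu)
      rcases Nat.lt_or_ge t p with hcase | hcase
      · have hz : t - (p-1) = 0 := by omega
        rw [hz, List.drop_zero] at hbnot
        have hE : Ecnt b u = 0 := Ecnt_eq_zero hbnot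
        have hD : Sb p t ≤ Dcnt u := by
          have h0 := htel 0 t (Nat.zero_le t) (le_refl t)
          simp only [List.take_zero, Dcnt_nil] at h0
          rw [List.take_of_length_le (le_of_eq hlu)] at h0
          rw [Sb_Ioc]
          omega
        have hqb : qbonacci p (t+1) = 2^t := qb_succ_le (by omega)
        have hSb : Sb p t = 2^t := Sb_two_pow (by omega)
        omega
      · have hE : Ecnt b u ≤ Dcnt (u.take (t - (p-1) - 1)) :=
          Ecnt_le_take (by omega) hbnot
        have e3 : t - (p-1) - 1 = t - p := by omega
        rw [e3] at hE
        have htel2 := htel (t-p) t (by omega) (le_refl t)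
        rw [List.take_of_length_le (le_of_eq hlu)] at htel2
        have hqb : qbonacci p (t+1) = ∑ j ∈ Finset.Ioc (t-p) t, qbonacci p j :=
          qb_Ioc hcase (by omega)
        omega

lemma Dcnt_SW {p t : ℕ} (hp : 2 ≤ p) {w : List α} (hw : w ∈ SW α p t) :
    Sb p t ≤ Dcnt w := by
  have htel := telescope (fun s => Dcnt (w.take s)) (qbonacci p) (SW_incr hp t w hw)
    0 t (Nat.zero_le t) (le_refl t)
  simp only [List.take_zero, Dcnt_nil] at htel
  rw [List.take_of_length_le (le_of_eq (len_SW hw))] at htel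
  rw [Sb_Ioc]
  omega

end Lower

section Main
variable {α : Type*} [DecidableEq α] [Fintype α]

def bigF (α : Type*) [DecidableEq α] [Fintype α] (t n : ℕ) :
    Finset (List α × (Fin n → List α)) :=
  (SW α 1 t).biUnion (fun w =>
    (Fintype.piFinset (fun _ : Fin n => w.sublists.toFinset)).image (fun f => (w, f)))

lemma mem_bigF {t n : ℕ} {P : List α × (Fin n → List α)} :
    P ∈ bigF α t n ↔ P.1.length = t ∧ ∀ j, P.2 j <+ P.1 := by
  obtain ⟨M, f⟩ := P
  constructor
  · intro h
    rw [bigF, Finset.mem_biUnion] at h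
    obtain ⟨w, hw, hmem⟩ := h
    rw [Finset.mem_image] at hmem
    obtain ⟨g, hg, heq⟩ := hmem
    rw [Fintype.mem_piFinset] at hg
    injection heq with heq1 heq2
    subst heq1; subst heq2
    exact ⟨mem_SW_one.1 hw, fun j => mem_subFinset.1 (hg j)⟩
  · rintro ⟨h1, h2⟩
    rw [bigF, Finset.mem_biUnion]
    refine ⟨M, mem_SW_one.2 h1, ?_⟩
    rw [Finset.mem_image]
    exact ⟨f, Fintype.mem_piFinset.2 (fun j => mem_subFinset.2 (h2 j)), rfl⟩

lemma card_bigF (t n : ℕ) :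
    (bigF α t n).card = ∑ w ∈ SW α 1 t, (Dcnt w) ^ n := by
  rw [bigF, Finset.card_biUnion]
  · apply Finset.sum_congr rfl
    intro w _
    rw [Finset.card_image_of_injective _ (fun f g h => congrArg Prod.snd h)]
    rw [Fintype.card_piFinset]
    simp [Dcnt]
  · intro w₁ _ w₂ _ hne
    simp only [Function.onFun]
    rw [Finset.disjoint_left]
    intro x hx₁ hx₂
    rw [Finset.mem_image] at hx₁ hx₂
    obtain ⟨g₁, _, rfl⟩ := hx₁
    obtain ⟨g₂, _, heq⟩ := hx₂
    exact hne (congrArg Prod.fst heq).symm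

end Main

theorem stmt14 {α : Type*} [Fintype α] (p q t n : ℕ) (hp : 2 ≤ p) (hpq : p ≤ q)
    (hn : 1 ≤ n) (hcard : Fintype.card α = q) :
    (q + 1 - p) ^ t * (∑ i ∈ Finset.range (t + 1), qbonacci p i) ^ n
        ≤ {P : List α × (Fin n → List α) |
            P.1.length = t ∧ ∀ j, P.2 j <+ P.1}.ncard ∧
    {P : List α × (Fin n → List α) | P.1.length = t ∧ ∀ j, P.2 j <+ P.1}.ncard
        ≤ q ^ t * (∑ i ∈ Finset.range (t + 1), qbonacci q i) ^ n := by
  classical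
  have e1 : (∑ i ∈ Finset.range (t + 1), qbonacci p i) = Sb p t := rfl
  have e2 : (∑ i ∈ Finset.range (t + 1), qbonacci q i) = Sb q t := rfl
  have hset : {P : List α × (Fin n → List α) | P.1.length = t ∧ ∀ j, P.2 j <+ P.1}
      = ↑(bigF α t n) := by
    ext P
    simp only [Set.mem_setOf_eq, Finset.mem_coe, mem_bigF]
  rw [e1, e2, hset, Set.ncard_coe_finset, card_bigF]
  constructor
  · calc (q + 1 - p) ^ t * (Sb p t) ^ n
        ≤ (SW α p t).card * (Sb p t) ^ n := by
          have h := card_SW_ge (α := α) (p := p) (by omega) t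
          rw [hcard] at h
          exact Nat.mul_le_mul_right _ h
      _ ≤ ∑ w ∈ SW α p t, (Dcnt w) ^ n := by
          rw [← smul_eq_mul]
          exact Finset.card_nsmul_le_sum _ _ _
            (fun w hw => Nat.pow_le_pow_left (Dcnt_SW hp hw) n)
      _ ≤ ∑ w ∈ SW α 1 t, (Dcnt w) ^ n :=
          Finset.sum_le_sum_of_subset (fun w hw => mem_SW_one.2 (len_SW hw))
  · calc ∑ w ∈ SW α 1 t, (Dcnt w) ^ n
        ≤ ∑ _w ∈ SW α 1 t, (Sb q t) ^ n := by
          apply Finset.sum_le_sum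
          intro w hw
          apply Nat.pow_le_pow_left
          have h := Dcnt_le_Sb (by rw [hcard]; omega) w
          rwa [hcard, mem_SW_one.1 hw] at h
      _ = q ^ t * (Sb q t) ^ n := by
          rw [Finset.sum_const, card_SW_one, hcard, smul_eq_mul]
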